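/- Let F be a free group and let A ≤ F be a nontrivial subgroup. If A commutes elementwise with B, B^{x₁}, …, B^{xₚ} for some nontrivial subgroup B ≤ F and elements x₁,…,xₚ ∈ F, then the subgroup generated by A, B, x₁, …, xₚ is abelian. -/

import Mathlib

namespace Stmt13Aux


variable {β : Type*}

lemma mem_of_cons_eq_append {x : β × Bool} :
    ∀ {l : List (β × Bool)}, x :: l = l ++ [x] → ∀ a ∈ l, a = x := by
  intro l
  induction l with
  | nil => intro _ a ha; simp at ha
  | cons h t ih =>
    intro heq a ha
    rw [List.cons_append] at heq
    obtain ⟨hx, ht⟩ := List.cons_eq_cons.mp heq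
    subst hx
    rcases List.mem_cons.mp ha with h1 | h1
    · exact h1
    · exact ih ht a h1

lemma invRev_cons (c : β × Bool) (M : List (β × Bool)) :
    FreeGroup.invRev (c :: M) = FreeGroup.invRev M ++ [(c.1, !c.2)] := by
  simp [FreeGroup.invRev]

lemma invRev_concat (c : β × Bool) (M : List (β × Bool)) :
    FreeGroup.invRev (M ++ [c]) = (c.1, !c.2) :: FreeGroup.invRev M := by
  simp [FreeGroup.invRev]

variable [DecidableEq β]

lemma toWord_single_mul (x : β × Bool) (z : FreeGroup β) :
  FreeGroup.toWord (FreeGroup.mk [x] * z) = (match FreeGroup.toWord z with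
    | [] => [x]
    | hd :: tl => if x.1 = hd.1 ∧ x.2 = !hd.2 then tl else x :: hd :: tl) := by
  conv_lhs => rw [← FreeGroup.mk_toWord (x := z)]
  rw [FreeGroup.mul_mk, FreeGroup.toWord_mk, List.singleton_append,
    FreeGroup.reduce.cons, FreeGroup.reduce_toWord]
  cases FreeGroup.toWord z <;> rfl

/-- If `z` commutes with a generator `a`, every letter of `z` is `a`. -/
lemma letters_eq_of_commute_of (z : FreeGroup β) (a : β)
    (h : FreeGroup.of a * z = z * FreeGroup.of a) :
    ∀ l ∈ z.toWord, l.1 = a := by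
  rcases List.eq_nil_or_concat z.toWord with hw | ⟨w', lst, hw⟩
  · simp [hw]
  rw [List.concat_eq_append] at hw
  -- decompose from the front as well
  have hnil : z.toWord ≠ [] := by rw [hw]; simp
  obtain ⟨hd, tl, hw2⟩ := List.exists_cons_of_ne_nil hnil
  -- left side
  have hofa : FreeGroup.of a = FreeGroup.mk [(a, true)] := rfl
  have hL : FreeGroup.toWord (FreeGroup.of a * z) =
      if (a, true).1 = hd.1 ∧ (a, true).2 = !hd.2 then tl else (a, true) :: hd :: tl := by
    rw [hofa, toWord_single_mul, hw2]
  -- right side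
  have hinv : (FreeGroup.of a)⁻¹ = FreeGroup.mk [(a, false)] := by
    rw [hofa, FreeGroup.inv_mk]; rfl
  have hzinv : (z⁻¹).toWord = ((lst.1, !lst.2) :: FreeGroup.invRev w') := by
    rw [FreeGroup.toWord_inv, hw, invRev_concat]
  have hR0 : FreeGroup.toWord (FreeGroup.mk [(a, false)] * z⁻¹) =
      if (a, false).1 = lst.1 ∧ (a, false).2 = !(!lst.2) then FreeGroup.invRev w'
      else (a, false) :: (lst.1, !lst.2) :: FreeGroup.invRev w' := by
    rw [toWord_single_mul, hzinv]
  have hzmul : z * FreeGroup.of a = (FreeGroup.mk [(a, false)] * z⁻¹)⁻¹ := by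
    rw [← hinv, mul_inv_rev, inv_inv, inv_inv]
  have hR : FreeGroup.toWord (z * FreeGroup.of a) =
      FreeGroup.invRev (if (a, false).1 = lst.1 ∧ (a, false).2 = !(!lst.2)
        then FreeGroup.invRev w'
        else (a, false) :: (lst.1, !lst.2) :: FreeGroup.invRev w') := by
    rw [hzmul, FreeGroup.toWord_inv, hR0]
  have key : (if (a, true).1 = hd.1 ∧ (a, true).2 = !hd.2 then tl else (a, true) :: hd :: tl)
      = FreeGroup.invRev (if (a, false).1 = lst.1 ∧ (a, false).2 = !(!lst.2)
        then FreeGroup.invRev w'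
        else (a, false) :: (lst.1, !lst.2) :: FreeGroup.invRev w') := by
    rw [← hL, ← hR, h]
  by_cases hP : (a, true).1 = hd.1 ∧ (a, true).2 = !hd.2
  · -- head is (a, false)
    have hhd : hd = (a, false) := by
      obtain ⟨h1, h2⟩ := hP
      simp only at h1 h2
      ext <;> simp [← h1]
      cases hb : hd.2 <;> simp [hb] at h2 ⊢
    by_cases hQ : (a, false).1 = lst.1 ∧ (a, false).2 = !(!lst.2)
    · -- case P, Q : tail = dropLast
      have hlst : lst = (a, false) := by
        obtain ⟨h1, h2⟩ := hQ
        simp only [Bool.not_not] at h1 h2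
        ext <;> simp [← h1, ← h2]
      rw [if_pos hP, if_pos hQ, FreeGroup.invRev_invRev] at key
      -- z.toWord = hd :: tl = w' ++ [lst], tl = w'
      have : hd :: tl = tl ++ [hd] := by
        rw [← hw2, hw, key, hhd, hlst]
      intro l hl
      rw [hw2] at hl
      rcases List.mem_cons.mp hl with h1 | h1
      · rw [h1, hhd]
      · rw [mem_of_cons_eq_append this l h1, hhd]
    · -- case P, ¬Q : length contradiction
      rw [if_pos hP, if_neg hQ, invRev_cons, invRev_cons, FreeGroup.invRev_invRev] at key
      have h1 := congrArg List.length key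
      have h2 := congrArg List.length (hw2.symm.trans hw)
      simp at h1 h2
      omega
  · by_cases hQ : (a, false).1 = lst.1 ∧ (a, false).2 = !(!lst.2)
    · -- case ¬P, Q : length contradiction
      rw [if_neg hP, if_pos hQ, FreeGroup.invRev_invRev] at key
      have h1 := congrArg List.length key
      have h2 := congrArg List.length (hw2.symm.trans hw)
      simp at h1 h2
      omega
    · -- case ¬P, ¬Q : x :: w = w ++ [x]
      rw [if_neg hP, if_neg hQ, invRev_cons, invRev_cons, FreeGroup.invRev_invRev] at key
      simp only [Bool.not_not, Bool.not_false] at key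
      have hkey : (a, true) :: z.toWord = z.toWord ++ [(a, true)] := by
        rw [hw2, key, ← hw, hw2]
      intro l hl
      rw [mem_of_cons_eq_append hkey l hl]



lemma mem_zpowers_of_subsingleton {β : Type*} (d : β) (hs : ∀ b : β, b = d)
    (z : FreeGroup β) : z ∈ Subgroup.zpowers (FreeGroup.of d) := by
  induction z with
  | C1 => exact Subgroup.one_mem _
  | of b => rw [show FreeGroup.of b = FreeGroup.of d by rw [hs b]]
            exact Subgroup.mem_zpowers _
  | inv_of b hb => exact Subgroup.inv_mem _ hb
  | mul y z hy hz => exact Subgroup.mul_mem _ hy hz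

lemma eq_one_of_isEmpty {β : Type*} [IsEmpty β] (z : FreeGroup β) : z = 1 := by
  classical
  rw [← FreeGroup.toWord_eq_nil_iff]
  rcases h : z.toWord with _ | ⟨hd, tl⟩
  · rfl
  · exact (IsEmpty.false hd.1).elim



/-- Centralizers of nontrivial elements in a free group are cyclic. -/
lemma centralizer_cyclic {α : Type*} (g : FreeGroup α) (hg : g ≠ 1) :
    ∃ c : FreeGroup α, Subgroup.centralizer {g} = Subgroup.zpowers c := by
  classical
  set C := Subgroup.centralizer ({g} : Set (FreeGroup α)) with hC
  have hgC : g ∈ C := Subgroup.mem_centralizer_iff.mpr (by rintro h rfl; rfl)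
  let e : C ≃* FreeGroup (IsFreeGroup.Generators C) := IsFreeGroup.toFreeGroup C
  set Γ := IsFreeGroup.Generators C
  let gC : C := ⟨g, hgC⟩
  have hgC1 : gC ≠ 1 := fun h => hg (congrArg Subtype.val h)
  set z := e gC with hzdef
  have hz1 : z ≠ 1 := fun h => hgC1 (e.injective (h.trans (map_one e).symm))
  have hcomm : ∀ y : FreeGroup Γ, y * z = z * y := by
    intro y
    have hu : g * ↑(e.symm y) = ↑(e.symm y) * g :=
      Subgroup.mem_centralizer_iff.mp (e.symm y).2 g rfl
    have h1 : e.symm y * gC = gC * e.symm y := Subtype.ext (by simpa using hu.symm)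
    have := congrArg e h1
    simpa [map_mul] using this
  have hw : z.toWord ≠ [] := fun h => hz1 (FreeGroup.toWord_eq_nil_iff.mp h)
  obtain ⟨l0, hl0⟩ := List.exists_mem_of_ne_nil z.toWord hw
  have hsub : ∀ b : Γ, b = l0.1 :=
    fun b => (letters_eq_of_commute_of z b (hcomm (FreeGroup.of b)) l0 hl0).symm
  refine ⟨(e.symm (FreeGroup.of l0.1) : C), ?_⟩
  apply le_antisymm
  · intro u hu
    obtain ⟨k, hk⟩ := Subgroup.mem_zpowers_iff.mp
      (mem_zpowers_of_subsingleton l0.1 hsub (e ⟨u, hu⟩))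
    have h2 : (e.symm (FreeGroup.of l0.1)) ^ k = (⟨u, hu⟩ : C) := by
      rw [← map_zpow, hk, MulEquiv.symm_apply_apply]
    exact Subgroup.mem_zpowers_iff.mpr ⟨k, by
      simpa using congrArg (Subtype.val) h2⟩
  · rw [Subgroup.zpowers_le]
    exact (e.symm (FreeGroup.of l0.1)).2


/-- If `x⁻¹ c^m x = c^n` with `m ≠ 0` in a free group, then `x` commutes with `c^m`. -/
lemma commute_of_conj_zpow {α : Type*} (c x : FreeGroup α) (m n : ℤ) (hm : m ≠ 0)
    (h : x⁻¹ * c ^ m * x = c ^ n) : Commute x (c ^ m) := by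
  classical
  set H := Subgroup.closure ({c, x} : Set (FreeGroup α)) with hH
  have hcH : c ∈ H := Subgroup.subset_closure (by simp)
  have hxH : x ∈ H := Subgroup.subset_closure (by simp)
  let cH : H := ⟨c, hcH⟩
  let xH : H := ⟨x, hxH⟩
  set Γ := IsFreeGroup.Generators H
  let ab : H →* Multiplicative (Γ →₀ ℤ) :=
    IsFreeGroup.lift (fun a : Γ => Multiplicative.ofAdd (Finsupp.single a (1 : ℤ)))
  have hrel : xH⁻¹ * cH ^ m * xH = cH ^ n := Subtype.ext (by push_cast; exact h)
  have hab : (ab cH) ^ m = (ab cH) ^ n := by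
    have h2 := congrArg ab hrel
    simp only [map_mul, map_inv, map_zpow] at h2
    calc (ab cH) ^ m = (ab xH)⁻¹ * (ab cH) ^ m * (ab xH) := by
          rw [mul_comm ((ab xH)⁻¹), mul_assoc, inv_mul_cancel, mul_one]
      _ = (ab cH) ^ n := h2
  set v : Γ →₀ ℤ := Multiplicative.toAdd (ab cH) with hv
  have hmn : m = n ∨ v = 0 := by
    have h0 : (m - n) • v = 0 := by
      have h3 := congrArg Multiplicative.toAdd hab
      simp only [toAdd_zpow] at h3
      rw [sub_smul, h3, sub_self]
    rcases smul_eq_zero.mp h0 with h1 | h1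
    · left; omega
    · right; exact h1
  rcases hmn with hmn | hveq
  · subst hmn
    have h4 : c ^ m * x = x * c ^ m := by
      have h5 := congrArg (fun t => x * t) h
      simpa [mul_assoc] using h5
    exact h4.symm
  · -- ab cH = 1; show xH and cH commute
    have habc : ab cH = 1 := by
      have h6 : Multiplicative.ofAdd v = Multiplicative.ofAdd 0 := by rw [hveq]
      simpa [hv] using h6
    have hmem : ∀ (g : FreeGroup α) (hg : g ∈ H), ab ⟨g, hg⟩ ∈ Subgroup.zpowers (ab xH) := by
      intro g hg
      refine Subgroup.closure_induction
        (p := fun g hg => ab ⟨g, hg⟩ ∈ Subgroup.zpowers (ab xH)) ?_ ?_ ?_ ?_ hg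
      · intro y hy
        rcases hy with rfl | rfl
        · show ab cH ∈ _
          rw [habc]; exact Subgroup.one_mem _
        · exact Subgroup.mem_zpowers _
      · show ab (1 : H) ∈ _
        rw [map_one]; exact Subgroup.one_mem _
      · intro y z hy hz hy' hz'
        show ab (⟨y, hy⟩ * ⟨z, hz⟩ : H) ∈ _
        rw [map_mul]; exact Subgroup.mul_mem _ hy' hz'
      · intro y hy hy'
        show ab (⟨y, hy⟩ : H)⁻¹ ∈ _
        rw [map_inv]; exact Subgroup.inv_mem _ hy'
    have hsurj : ∀ f : Γ →₀ ℤ, ∃ hh : H, ab hh = Multiplicative.ofAdd f := by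
      intro f
      induction f using Finsupp.induction with
      | zero => exact ⟨1, by simp⟩
      | single_add a b f _ _ ih =>
        obtain ⟨hh, hhh⟩ := ih
        refine ⟨IsFreeGroup.of a ^ b * hh, ?_⟩
        rw [map_mul, map_zpow, hhh]
        show (IsFreeGroup.lift _) (IsFreeGroup.of a) ^ b * _ = _
        rw [IsFreeGroup.lift_of]
        apply Multiplicative.toAdd.injective
        rw [toAdd_mul, toAdd_zpow]
        simp [Finsupp.smul_single]
    have hrange : ∀ w : Multiplicative (Γ →₀ ℤ), w ∈ Subgroup.zpowers (ab xH) := by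
      intro w
      obtain ⟨⟨g, hg⟩, hw⟩ := hsurj (Multiplicative.toAdd w)
      have hw' : ab ⟨g, hg⟩ = w := by simpa using hw
      rw [← hw']
      exact hmem g hg
    have hGsub : ∀ a b : Γ, a = b := by
      intro a b
      by_contra hab'
      obtain ⟨k, hk⟩ := Subgroup.mem_zpowers_iff.mp
        (hrange (Multiplicative.ofAdd (Finsupp.single a (1 : ℤ))))
      obtain ⟨l, hl⟩ := Subgroup.mem_zpowers_iff.mp
        (hrange (Multiplicative.ofAdd (Finsupp.single b (1 : ℤ))))
      set w0 : Γ →₀ ℤ := Multiplicative.toAdd (ab xH) with hw0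
      have hk' : k • w0 = Finsupp.single a (1 : ℤ) := by
        have := congrArg Multiplicative.toAdd hk
        simpa [toAdd_zpow] using this
      have hl' : l • w0 = Finsupp.single b (1 : ℤ) := by
        have := congrArg Multiplicative.toAdd hl
        simpa [toAdd_zpow] using this
      have h1 : k * w0 a = 1 := by
        have := congrArg (fun f => f a) hk'
        simpa [Finsupp.smul_apply] using this
      have h2 : k * w0 b = 0 := by
        have := congrArg (fun f => f b) hk'
        simpa [Finsupp.smul_apply, Finsupp.single_apply_eq_zero.mpr, hab'] using this
      have h3 : l * w0 b = 1 := by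
        have := congrArg (fun f => f b) hl'
        simpa [Finsupp.smul_apply] using this
      rcases mul_eq_zero.mp h2 with h4 | h4
      · rw [h4, zero_mul] at h1; exact one_ne_zero h1.symm
      · rw [h4, mul_zero] at h3; exact one_ne_zero h3.symm
    -- H is abelian
    have hcommH : xH * cH = cH * xH := by
      let e : H ≃* FreeGroup Γ := IsFreeGroup.toFreeGroup H
      have key : e xH * e cH = e cH * e xH := by
        cases isEmpty_or_nonempty Γ with
        | inl hemp =>
          rw [eq_one_of_isEmpty (e xH), eq_one_of_isEmpty (e cH)]
        | inr hne =>
          obtain ⟨d⟩ := hne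
          obtain ⟨i, hi⟩ := Subgroup.mem_zpowers_iff.mp
            (mem_zpowers_of_subsingleton d (fun b => hGsub b d) (e xH))
          obtain ⟨j, hj⟩ := Subgroup.mem_zpowers_iff.mp
            (mem_zpowers_of_subsingleton d (fun b => hGsub b d) (e cH))
          rw [← hi, ← hj]
          exact (Commute.refl _).zpow_zpow i j
      have key2 : e (xH * cH) = e (cH * xH) := by rw [map_mul, map_mul]; exact key
      exact e.injective key2
    have hxc : x * c = c * x := congrArg Subtype.val hcommH
    exact (Commute.zpow_right hxc m)
end Stmt13Aux


/-- In a free group `F`, if a nontrivial subgroup `A` commutes elementwise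
with `B, B^{x₁}, …, B^{xₚ}` for a nontrivial subgroup `B` and elements
`x₁, …, xₚ`, then `⟨A, B, x₁, …, xₚ⟩` is abelian. -/
theorem stmt_13 {α : Type*} (A B : Subgroup (FreeGroup α))
    (hA : A ≠ ⊥) (hB : B ≠ ⊥) {p : ℕ} (x : Fin p → FreeGroup α)
    (hcomm : ∀ a ∈ A, ∀ b ∈ B, a * b = b * a)
    (hconj : ∀ j : Fin p, ∀ a ∈ A, ∀ b ∈ B,
      a * ((x j)⁻¹ * b * x j) = ((x j)⁻¹ * b * x j) * a) :
    ∀ u ∈ Subgroup.closure ((A : Set (FreeGroup α)) ∪ B ∪ Set.range x),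
    ∀ v ∈ Subgroup.closure ((A : Set (FreeGroup α)) ∪ B ∪ Set.range x),
      u * v = v * u := by
    classical
  obtain ⟨a₀, ha₀A, ha₀⟩ : ∃ a ∈ A, a ≠ (1 : FreeGroup α) :=
    (A.bot_or_exists_ne_one).resolve_left hA
  obtain ⟨b₀, hb₀B, hb₀⟩ : ∃ b ∈ B, b ≠ (1 : FreeGroup α) :=
    (B.bot_or_exists_ne_one).resolve_left hB
  obtain ⟨c₀, hc₀⟩ := Stmt13Aux.centralizer_cyclic a₀ ha₀
  obtain ⟨c₁, hc₁⟩ := Stmt13Aux.centralizer_cyclic b₀ hb₀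
  have hzc : ∀ (c : FreeGroup α), ∀ u ∈ Subgroup.zpowers c, ∀ v ∈ Subgroup.zpowers c,
      u * v = v * u := by
    intro c u hu v hv
    obtain ⟨i, hi⟩ := Subgroup.mem_zpowers_iff.mp hu
    obtain ⟨j, hj⟩ := Subgroup.mem_zpowers_iff.mp hv
    rw [← hi, ← hj]
    exact ((Commute.refl c).zpow_zpow i j)
  -- everything commuting with a₀ is in zpowers c₀, similarly for b₀ / c₁
  have hmem₀ : ∀ g : FreeGroup α, a₀ * g = g * a₀ → g ∈ Subgroup.zpowers c₀ := by
    intro g hg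
    rw [← hc₀]
    exact Subgroup.mem_centralizer_iff.mpr (by rintro h rfl; exact hg)
  have hmem₁ : ∀ g : FreeGroup α, b₀ * g = g * b₀ → g ∈ Subgroup.zpowers c₁ := by
    intro g hg
    rw [← hc₁]
    exact Subgroup.mem_centralizer_iff.mpr (by rintro h rfl; exact hg)
  -- A and a₀ lie in zpowers c₁
  have hAc₁ : ∀ a ∈ A, a ∈ Subgroup.zpowers c₁ :=
    fun a ha => hmem₁ a (hcomm a ha b₀ hb₀B).symm
  -- B and b₀ lie in zpowers c₀
  have hBc₀ : ∀ b ∈ B, b ∈ Subgroup.zpowers c₀ :=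
    fun b hb => hmem₀ b (hcomm a₀ ha₀A b hb)
  have hb₀c₀ : b₀ ∈ Subgroup.zpowers c₀ := hBc₀ b₀ hb₀B
  -- hence B lies in zpowers c₁ as well
  have hBc₁ : ∀ b ∈ B, b ∈ Subgroup.zpowers c₁ :=
    fun b hb => hmem₁ b (hzc c₀ b₀ hb₀c₀ b (hBc₀ b hb))
  -- b₀ is a nonzero power of c₀
  obtain ⟨m, hmdef⟩ := Subgroup.mem_zpowers_iff.mp hb₀c₀
  have hm : m ≠ 0 := by
    rintro rfl
    rw [zpow_zero] at hmdef
    exact hb₀ hmdef.symm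
  -- the elements x j lie in zpowers c₁
  have hxc₁ : ∀ j : Fin p, x j ∈ Subgroup.zpowers c₁ := by
    intro j
    have hconj' : (x j)⁻¹ * b₀ * x j ∈ Subgroup.zpowers c₀ :=
      hmem₀ _ (hconj j a₀ ha₀A b₀ hb₀B)
    obtain ⟨n, hndef⟩ := Subgroup.mem_zpowers_iff.mp hconj'
    have hrel : (x j)⁻¹ * c₀ ^ m * x j = c₀ ^ n := by rw [hmdef, hndef]
    have hcx : Commute (x j) (c₀ ^ m) :=
      Stmt13Aux.commute_of_conj_zpow c₀ (x j) m n hm hrel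
    refine hmem₁ (x j) ?_
    rw [← hmdef]
    exact hcx.symm
  -- the whole closure is contained in the cyclic subgroup zpowers c₁
  have hle : Subgroup.closure ((A : Set (FreeGroup α)) ∪ B ∪ Set.range x)
      ≤ Subgroup.zpowers c₁ := by
    rw [Subgroup.closure_le]
    intro g hg
    rcases hg with (hg | hg) | hg
    · exact hAc₁ g hg
    · exact hBc₁ g hg
    · obtain ⟨j, rfl⟩ := hg
      exact hxc₁ j
  intro u hu v hv
  exact hzc c₁ u (hle hu) v (hle hv)
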